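/- Let B be a nonempty subset of ℚ_{>0} \ ℕ such that for all distinct b, b' ∈ B: n(b) > 1, gcd(d(b), d(b')) = 1, and |n(b) − d(b)| = |n(b') − d(b')|. Fix b₁ ∈ B. Then the set of distances of the Puiseux monoid M_B := ⟨b^n : b ∈ B, n ∈ ℕ₀⟩ satisfies Δ(M_B) ⊆ {|n(b₁) − d(b₁)|}. -/

import Mathlib

open scoped NNRat ENNReal

/-- The set of atoms of a Puiseux monoid (additive submonoid of `ℚ≥0`). -/
def PMatoms (M : AddSubmonoid ℚ≥0) : Set ℚ≥0 :=
  {a | a ∈ M ∧ a ≠ 0 ∧ ∀ y ∈ M, ∀ z ∈ M, y ≠ 0 → z ≠ 0 → a ≠ y + z}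

/-- A Puiseux monoid is atomic if it is generated by its atoms. -/
def PMatomic (M : AddSubmonoid ℚ≥0) : Prop :=
  ∀ x ∈ M, x ∈ AddSubmonoid.closure (PMatoms M)

/-- The set of factorizations of `x` in `M`: multisets of atoms summing to `x`. -/
def PMfactorizations (M : AddSubmonoid ℚ≥0) (x : ℚ≥0) : Set (Multiset ℚ≥0) :=
  {s | (∀ a ∈ s, a ∈ PMatoms M) ∧ s.sum = x}

/-- The set of lengths of `x` in `M`. -/
def PMlengths (M : AddSubmonoid ℚ≥0) (x : ℚ≥0) : Set ℕ :=
  Multiset.card '' PMfactorizations M x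

/-- The elasticity of an element: `sup L(x) / inf L(x)` in `ℝ≥0∞`, `1` for `x = 0`. -/
noncomputable def PMelasticityOf (M : AddSubmonoid ℚ≥0) (x : ℚ≥0) : ℝ≥0∞ :=
  if x = 0 then 1
  else sSup ((fun n : ℕ => (n : ℝ≥0∞)) '' PMlengths M x) /
       sInf ((fun n : ℕ => (n : ℝ≥0∞)) '' PMlengths M x)

/-- The elasticity of a Puiseux monoid. -/
noncomputable def PMelasticity (M : AddSubmonoid ℚ≥0) : ℝ≥0∞ :=
  ⨆ x ∈ M, PMelasticityOf M x

/-- The union of sets of lengths containing `n`. -/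
def PMunionOfLengths (M : AddSubmonoid ℚ≥0) (n : ℕ) : Set ℕ :=
  {m | ∃ x : ℚ≥0, n ∈ PMlengths M x ∧ m ∈ PMlengths M x}

/-- The `n`-th local elasticity `ρ_n(M) = sup U_n(M)` in `ℝ≥0∞`. -/
noncomputable def PMlocalElasticity (M : AddSubmonoid ℚ≥0) (n : ℕ) : ℝ≥0∞ :=
  sSup ((fun m : ℕ => (m : ℝ≥0∞)) '' PMunionOfLengths M n)

/-- The set of distances of an element `x` of `M`. -/
def PMdistances (M : AddSubmonoid ℚ≥0) (x : ℚ≥0) : Set ℕ :=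
  {d | 0 < d ∧ ∃ l ∈ PMlengths M x,
    PMlengths M x ∩ Set.Icc l (l + d) = {l, l + d}}

/-- The set of distances (delta set) of `M`. -/
def PMDelta (M : AddSubmonoid ℚ≥0) : Set ℕ :=
  ⋃ x ∈ {y : ℚ≥0 | y ∈ M ∧ y ≠ 0}, PMdistances M x

/-- `(Mi)` is an approximation of `M`: an increasing sequence of atomic submonoids
with union `M` and increasing sets of atoms. -/
def PMapprox (M : AddSubmonoid ℚ≥0) (Mi : ℕ → AddSubmonoid ℚ≥0) : Prop :=
  (∀ i, Mi i ≤ Mi (i + 1)) ∧ (∀ i, PMatomic (Mi i)) ∧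
  (∀ i, PMatoms (Mi i) ⊆ PMatoms (Mi (i + 1))) ∧
  (∀ x, x ∈ M ↔ ∃ i, x ∈ Mi i)

namespace Stmt15Aux

open Multiset

/-- generators -/
def Gen (B : Set ℚ≥0) : Set ℚ≥0 := {q : ℚ≥0 | ∃ b ∈ B, ∃ n : ℕ, q = b ^ n}

def Step (B : Set ℚ≥0) (u v : Multiset ℚ≥0) : Prop :=
  ∃ b ∈ B, ∃ m : ℕ,
    Multiset.replicate b.den (b ^ (m + 1)) ≤ u ∧
    v = u - Multiset.replicate b.den (b ^ (m + 1)) + Multiset.replicate b.num (b ^ m)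

def Reduced (B : Set ℚ≥0) (u : Multiset ℚ≥0) : Prop :=
  ∀ b ∈ B, ∀ m : ℕ, u.count (b ^ (m + 1)) < b.den

section Basic

variable {B : Set ℚ≥0}

lemma den_two_le {b : ℚ≥0} (hb : ∀ n : ℕ, b ≠ (n : ℚ≥0)) : 2 ≤ b.den := by
  rcases Nat.lt_or_ge b.den 2 with h | h
  · exfalso
    have h1 : b.den = 1 := by have := b.den_pos; omega
    have h2 : (b.num : ℚ≥0) = b := by
      have := NNRat.mul_den_eq_num b
      rw [h1] at this; simpa using this.symm
    exact hb b.num h2.symm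
  · exact h

lemma num_pos {b : ℚ≥0} (hb : 0 < b) : 0 < b.num := NNRat.num_pos.2 hb

lemma den_smul_eq (b : ℚ≥0) (m : ℕ) : b.den • b ^ (m + 1) = b.num • b ^ m := by
  rw [nsmul_eq_mul, nsmul_eq_mul, pow_succ]
  calc (b.den : ℚ≥0) * (b ^ m * b) = (↑b.den * b) * b ^ m := by ring
    _ = ↑b.num * b ^ m := by rw [NNRat.den_mul_eq_num]

lemma Step.sum_eq {u v : Multiset ℚ≥0} (h : Step B u v) : v.sum = u.sum := by
  obtain ⟨b, hb, m, hle, rfl⟩ := h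
  have hu : u - Multiset.replicate b.den (b ^ (m + 1)) + Multiset.replicate b.den (b ^ (m + 1)) = u :=
    tsub_add_cancel_of_le hle
  calc (u - Multiset.replicate b.den (b ^ (m + 1)) + Multiset.replicate b.num (b ^ m)).sum
      = (u - Multiset.replicate b.den (b ^ (m + 1))).sum + b.num • b ^ m := by
        rw [Multiset.sum_add, Multiset.sum_replicate]
    _ = (u - Multiset.replicate b.den (b ^ (m + 1))).sum + b.den • b ^ (m + 1) := by
        rw [den_smul_eq]
    _ = u.sum := by rw [← Multiset.sum_replicate, ← Multiset.sum_add, hu]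

lemma Step.card_rel {u v : Multiset ℚ≥0} (h : Step B u v) :
    ∃ b ∈ B, v.card + b.den = u.card + b.num := by
  obtain ⟨b, hb, m, hle, rfl⟩ := h
  refine ⟨b, hb, ?_⟩
  have hu : u - Multiset.replicate b.den (b ^ (m + 1)) + Multiset.replicate b.den (b ^ (m + 1)) = u :=
    tsub_add_cancel_of_le hle
  have hcard : (u - Multiset.replicate b.den (b ^ (m + 1))).card + b.den = u.card := by
    have := congrArg Multiset.card hu
    rwa [Multiset.card_add, Multiset.card_replicate] at this
  rw [Multiset.card_add, Multiset.card_replicate]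
  omega

lemma Step.card_pm {δ : ℕ} (hδ : ∀ b ∈ B, ((b.num : ℤ) - (b.den : ℤ)).natAbs = δ)
    {u v : Multiset ℚ≥0} (h : Step B u v) :
    v.card = u.card + δ ∨ u.card = v.card + δ := by
  obtain ⟨b, hb, hc⟩ := h.card_rel
  have := hδ b hb
  omega

lemma Step.mem_gen {u v : Multiset ℚ≥0} (h : Step B u v) (hu : ∀ a ∈ u, a ∈ Gen B) :
    ∀ a ∈ v, a ∈ Gen B := by
  obtain ⟨b, hb, m, hle, rfl⟩ := h
  intro a ha
  rcases Multiset.mem_add.1 ha with ha | ha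
  · exact hu a (Multiset.mem_of_le (tsub_le_self) ha)
  · rw [Multiset.eq_of_mem_replicate ha]
    exact ⟨b, hb, m, rfl⟩

lemma pow_den {b : ℚ≥0} (m : ℕ) : (b ^ m).den = b.den ^ m := NNRat.den_pow b m

lemma pow_inj {b : ℚ≥0} (hden : 2 ≤ b.den) {m j : ℕ} (h : b ^ m = b ^ j) : m = j := by
  have : b.den ^ m = b.den ^ j := by rw [← pow_den, ← pow_den, h]
  exact Nat.pow_right_injective hden this

lemma pow_ne_pow {b b' : ℚ≥0} (hden : 2 ≤ b.den) (hcop : Nat.Coprime b.den b'.den)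
    {m j : ℕ} (hm : 1 ≤ m) : b ^ m ≠ b' ^ j := by
  intro h
  have hd : b.den ^ m = b'.den ^ j := by rw [← pow_den, ← pow_den, h]
  have hc : Nat.Coprime (b.den ^ m) (b'.den ^ j) := hcop.pow m j
  rw [hd] at hc
  have h1 : b'.den ^ j = 1 := by rwa [Nat.Coprime, Nat.gcd_self] at hc
  rw [h1] at hd
  have : 2 ≤ b.den ^ m := le_trans hden (Nat.le_self_pow (by omega) _)
  omega

/-- reduction: from any multiset of generators there is a chain of steps to a reduced one -/
lemma reduce_exists (hpos : ∀ b ∈ B, 0 < b) (hden : ∀ b ∈ B, 2 ≤ b.den) :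
    ∀ u : Multiset ℚ≥0, (∀ a ∈ u, a ∈ Gen B) →
      ∃ (k : ℕ) (g : ℕ → Multiset ℚ≥0), g 0 = u ∧ (∀ i < k, Step B (g i) (g (i + 1))) ∧
        Reduced B (g k) := by
  suffices H : ∀ N : ℕ, ∀ u : Multiset ℚ≥0, (u.map NNRat.num).sum ≤ N →
      (∀ a ∈ u, a ∈ Gen B) →
      ∃ (k : ℕ) (g : ℕ → Multiset ℚ≥0), g 0 = u ∧ (∀ i < k, Step B (g i) (g (i + 1))) ∧
        Reduced B (g k) by
    exact fun u hu => H _ u le_rfl hu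
  intro N
  induction N using Nat.strong_induction_on with
  | _ N IH =>
    intro u hΦ hu
    by_cases hred : Reduced B u
    · exact ⟨0, fun _ => u, rfl, by omega, hred⟩
    · simp only [Reduced, not_forall, not_lt] at hred
      obtain ⟨b, hb, m, hcount⟩ := hred
      set r := Multiset.replicate b.den (b ^ (m + 1)) with hr
      have hle : r ≤ u := Multiset.le_count_iff_replicate_le.1 hcount
      set v := u - r + Multiset.replicate b.num (b ^ m) with hv
      have hstep : Step B u v := ⟨b, hb, m, hle, rfl⟩
      have hbpos : 0 < b := hpos b hb
      have hp1 : 1 ≤ b.num := num_pos hbpos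
      -- Φ decreases
      have hsub : u - r + r = u := tsub_add_cancel_of_le hle
      have hΦu : (u.map NNRat.num).sum = ((u - r).map NNRat.num).sum + b.den * b.num ^ (m + 1) := by
        conv_lhs => rw [← hsub]
        rw [Multiset.map_add, Multiset.sum_add, hr, Multiset.map_replicate,
          Multiset.sum_replicate, smul_eq_mul, NNRat.num_pow]
      have hΦv : (v.map NNRat.num).sum = ((u - r).map NNRat.num).sum + b.num * b.num ^ m := by
        rw [hv, Multiset.map_add, Multiset.sum_add, Multiset.map_replicate,
          Multiset.sum_replicate, smul_eq_mul, NNRat.num_pow]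
      have hq2 : 2 ≤ b.den := hden b hb
      have hdec : (v.map NNRat.num).sum < (u.map NNRat.num).sum := by
        have hpow : 1 ≤ b.num ^ (m + 1) := Nat.one_le_pow _ _ (by omega)
        have : b.num * b.num ^ m = b.num ^ (m + 1) := (pow_succ b.num m).symm ▸ (mul_comm _ _)
        rw [hΦu, hΦv, this]
        have : b.num ^ (m + 1) < b.den * b.num ^ (m + 1) := by nlinarith
        omega
      have hvN : (v.map NNRat.num).sum < N := lt_of_lt_of_le hdec hΦ
      obtain ⟨k, g, hg0, hgstep, hgred⟩ := IH _ hvN v le_rfl (hstep.mem_gen hu)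
      refine ⟨k + 1, fun i => if i = 0 then u else g (i - 1), rfl, ?_, ?_⟩
      · intro i hi
        show Step B (if i = 0 then u else g (i - 1)) (if i + 1 = 0 then u else g (i + 1 - 1))
        rcases Nat.eq_zero_or_pos i with rfl | hi0
        · simpa [hg0] using hstep
        · rw [if_neg (by omega : ¬ i = 0), if_neg (by omega : ¬ i + 1 = 0),
            (by omega : i + 1 - 1 = (i - 1) + 1)]
          exact hgstep _ (by omega)
      · show Reduced B (if k + 1 = 0 then u else g (k + 1 - 1))
        rw [if_neg (by omega : ¬ k + 1 = 0), (by omega : k + 1 - 1 = k)]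
        exact hgred

section KeyHelpers

variable {B : Set ℚ≥0}

lemma multiset_finset_sum (s : Finset ℕ) (f : ℕ → Multiset ℚ≥0) :
    (∑ m ∈ s, f m).sum = ∑ m ∈ s, (f m).sum :=
  map_sum Multiset.sumAddMonoidHom f s

lemma coprime_den_sum {n : ℕ} :
    ∀ (s : Multiset ℚ≥0), (∀ a ∈ s, Nat.Coprime a.den n) → Nat.Coprime (s.sum).den n := by
  intro s
  induction s using Multiset.induction_on with
  | empty =>
    intro _
    simp only [Multiset.sum_zero]
    have h0 : (0 : ℚ≥0).den = 1 := rfl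
    rw [h0]
    exact Nat.coprime_one_left n
  | cons a s IH =>
    intro h
    rw [Multiset.sum_cons]
    have h1 : Nat.Coprime a.den n := h a (Multiset.mem_cons_self a s)
    have h2 : Nat.Coprime (s.sum).den n := IH fun x hx => h x (Multiset.mem_cons_of_mem hx)
    have hdvd : (a + s.sum).den ∣ a.den * (s.sum).den := by
      have := Rat.add_den_dvd (a : ℚ) (s.sum : ℚ)
      rw [← NNRat.coe_add] at this
      simpa only [NNRat.den_coe] using this
    exact Nat.Coprime.coprime_dvd_left hdvd (Nat.Coprime.mul h1 h2)

/-- split a multiset of generators into the positive powers of `b` up to level `L`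
    and a rest with denominator coprime to `b.den`. -/
lemma split_sum (hden : ∀ b ∈ B, 2 ≤ b.den)
    (hgcd : ∀ b ∈ B, ∀ b' ∈ B, b ≠ b' → Nat.Coprime b.den b'.den)
    {b : ℚ≥0} (hb : b ∈ B) {L : ℕ}
    {w : Multiset ℚ≥0} (hw : ∀ a ∈ w, a ∈ Gen B)
    (htop : ∀ m : ℕ, L < m → w.count (b ^ m) = 0) :
    ∃ T : ℚ≥0, Nat.Coprime T.den b.den ∧
      w.sum = (∑ m ∈ Finset.Icc 1 L, (w.count (b ^ m)) • b ^ m) + T := by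
  classical
  have hq2 := hden b hb
  set c : ℕ → ℕ := fun m => w.count (b ^ m) with hc
  set w₁ : Multiset ℚ≥0 := ∑ m ∈ Finset.Icc 1 L, Multiset.replicate (c m) (b ^ m) with hw₁
  have hcnt : ∀ a : ℚ≥0, w₁.count a = ∑ m ∈ Finset.Icc 1 L, if b ^ m = a then c m else 0 := by
    intro a
    rw [hw₁, Multiset.count_sum']
    exact Finset.sum_congr rfl fun m _ => Multiset.count_replicate a (b ^ m) (c m)
  have hcntpow : ∀ m₀ ∈ Finset.Icc 1 L, w₁.count (b ^ m₀) = c m₀ := by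
    intro m₀ hm₀
    rw [hcnt, Finset.sum_eq_single m₀]
    · simp
    · intro m hm hne
      rw [if_neg fun h => hne (pow_inj hq2 h)]
    · intro h; exact absurd hm₀ h
  have hcnt0 : ∀ a : ℚ≥0, (∀ m : ℕ, 1 ≤ m → m ≤ L → a ≠ b ^ m) → w₁.count a = 0 := by
    intro a ha
    rw [hcnt]
    apply Finset.sum_eq_zero
    intro m hm
    obtain ⟨h1, h2⟩ := Finset.mem_Icc.1 hm
    rw [if_neg (Ne.symm (ha m h1 h2))]
  have hle : w₁ ≤ w := by
    rw [Multiset.le_iff_count]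
    intro a
    by_cases hpow : ∃ m : ℕ, 1 ≤ m ∧ m ≤ L ∧ a = b ^ m
    · obtain ⟨m, hm1, hmL, rfl⟩ := hpow
      rw [hcntpow m (Finset.mem_Icc.2 ⟨hm1, hmL⟩)]
    · push_neg at hpow
      rw [hcnt0 a (fun m h1 h2 => hpow m h1 h2)]
      exact Nat.zero_le _
  have hsum₁ : w₁.sum = ∑ m ∈ Finset.Icc 1 L, (c m) • b ^ m := by
    rw [hw₁, multiset_finset_sum]
    exact Finset.sum_congr rfl fun m _ => Multiset.sum_replicate (c m) (b ^ m)
  refine ⟨(w - w₁).sum, ?_, ?_⟩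
  · apply coprime_den_sum
    intro a ha
    have haw : a ∈ w := Multiset.mem_of_le tsub_le_self ha
    obtain ⟨b', hb', j, rfl⟩ := hw a haw
    by_cases hpow : ∃ m : ℕ, 1 ≤ m ∧ b' ^ j = b ^ m
    · exfalso
      obtain ⟨m, hm1, hme⟩ := hpow
      have hcw : (w - w₁).count (b' ^ j) = w.count (b' ^ j) - w₁.count (b' ^ j) :=
        Multiset.count_sub _ _ _
      rcases le_or_gt m L with hmL | hmL
      · have : w₁.count (b' ^ j) = w.count (b' ^ j) := by
          rw [hme, hcntpow m (Finset.mem_Icc.2 ⟨hm1, hmL⟩)]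
        rw [this, Nat.sub_self] at hcw
        exact (Multiset.count_eq_zero.1 hcw) ha
      · have : w.count (b' ^ j) = 0 := by rw [hme]; exact htop m hmL
        have : (w - w₁).count (b' ^ j) = 0 := by omega
        exact (Multiset.count_eq_zero.1 this) ha
    · push_neg at hpow
      rcases Nat.eq_zero_or_pos j with rfl | hj
      · rw [pow_zero]
        have h1 : (1 : ℚ≥0).den = 1 := rfl
        rw [h1]
        exact Nat.coprime_one_left _
      · have hne : b' ≠ b := by
          intro h
          exact hpow j hj (by rw [h])
        rw [pow_den]
        exact Nat.Coprime.pow_left j (hgcd b' hb' b hb hne)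
  · have hsub : w - w₁ + w₁ = w := tsub_add_cancel_of_le hle
    calc w.sum = (w - w₁ + w₁).sum := by rw [hsub]
      _ = (w - w₁).sum + w₁.sum := Multiset.sum_add _ _
      _ = (∑ m ∈ Finset.Icc 1 L, (c m) • b ^ m) + (w - w₁).sum := by rw [hsum₁, add_comm]

/-- the key congruence: top-level counts agree -/
lemma key_congr (hden : ∀ b ∈ B, 2 ≤ b.den)
    (hgcd : ∀ b ∈ B, ∀ b' ∈ B, b ≠ b' → Nat.Coprime b.den b'.den)
    {b : ℚ≥0} (hb : b ∈ B) {L : ℕ} (hL : 1 ≤ L)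
    {u v : Multiset ℚ≥0} (hu : ∀ a ∈ u, a ∈ Gen B) (hv : ∀ a ∈ v, a ∈ Gen B)
    (hsum : u.sum = v.sum)
    (htopu : ∀ m : ℕ, L < m → u.count (b ^ m) = 0)
    (htopv : ∀ m : ℕ, L < m → v.count (b ^ m) = 0)
    (hredu : u.count (b ^ L) < b.den) (hredv : v.count (b ^ L) < b.den) :
    u.count (b ^ L) = v.count (b ^ L) := by
  obtain ⟨T₁, hT₁cop, hT₁⟩ := split_sum hden hgcd hb hu htopu
  obtain ⟨T₂, hT₂cop, hT₂⟩ := split_sum hden hgcd hb hv htopv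
  set c : ℕ → ℕ := fun m => u.count (b ^ m) with hcdef
  set c' : ℕ → ℕ := fun m => v.count (b ^ m) with hc'def
  have hq2 := hden b hb
  have hbq : (b : ℚ) * (b.den : ℚ) = (b.num : ℚ) := by
    have := NNRat.mul_den_eq_num b
    have h2 := congrArg (fun x : ℚ≥0 => (x : ℚ)) this
    push_cast at h2
    simpa using h2
  -- the rational equation
  have heq : (∑ m ∈ Finset.Icc 1 L, (c m : ℚ) * (b : ℚ) ^ m) + (T₁ : ℚ)
      = (∑ m ∈ Finset.Icc 1 L, (c' m : ℚ) * (b : ℚ) ^ m) + (T₂ : ℚ) := by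
    have h1 := congrArg (fun x : ℚ≥0 => (x : ℚ)) (hT₁ ▸ hT₂ ▸ hsum)
    push_cast at h1
    simpa [nsmul_eq_mul] using h1
  -- integer versions
  set A₁ : ℤ := ∑ m ∈ Finset.Icc 1 L, (c m : ℤ) * (b.num : ℤ) ^ m * (b.den : ℤ) ^ (L - m) with hA₁
  set A₂ : ℤ := ∑ m ∈ Finset.Icc 1 L, (c' m : ℤ) * (b.num : ℤ) ^ m * (b.den : ℤ) ^ (L - m) with hA₂
  have hterm : ∀ (d : ℕ → ℕ), ((∑ m ∈ Finset.Icc 1 L,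
      (d m : ℤ) * (b.num : ℤ) ^ m * (b.den : ℤ) ^ (L - m) : ℤ) : ℚ)
      = (b.den : ℚ) ^ L * ∑ m ∈ Finset.Icc 1 L, (d m : ℚ) * (b : ℚ) ^ m := by
    intro d
    push_cast
    rw [Finset.mul_sum]
    refine Finset.sum_congr rfl fun m hm => ?_
    obtain ⟨hm1, hmL⟩ := Finset.mem_Icc.1 hm
    have hpow : (b : ℚ) ^ m * (b.den : ℚ) ^ m = (b.num : ℚ) ^ m := by
      rw [← mul_pow, hbq]
    have hsplit : (b.den : ℚ) ^ L = (b.den : ℚ) ^ m * (b.den : ℚ) ^ (L - m) := by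
      rw [← pow_add]
      congr 1
      omega
    calc (d m : ℚ) * (b.num : ℚ) ^ m * (b.den : ℚ) ^ (L - m)
        = (d m : ℚ) * ((b : ℚ) ^ m * (b.den : ℚ) ^ m) * (b.den : ℚ) ^ (L - m) := by rw [hpow]
      _ = (b.den : ℚ) ^ L * ((d m : ℚ) * (b : ℚ) ^ m) := by rw [hsplit]; ring
  have hA₁c := hterm c
  have hA₂c := hterm c'
  set t : ℚ := (T₂ : ℚ) - (T₁ : ℚ) with ht
  have hzt : ((A₁ - A₂ : ℤ) : ℚ) = (b.den : ℚ) ^ L * t := by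
    rw [Int.cast_sub, ht]
    linear_combination hA₁c - hA₂c + ((b.den : ℚ) ^ L) * heq
  -- t is an integer
  have htden : t.den = 1 := by
    have hdvd1 : t.den ∣ b.den ^ L := by
      have hne : ((b.den : ℤ) ^ L) ≠ 0 := by positivity
      have hdiv : t = Rat.divInt (A₁ - A₂) ((b.den : ℤ) ^ L) := by
        have h7 : t = ((A₁ - A₂ : ℤ) : ℚ) / ((b.den : ℚ) ^ L) := by
          rw [hzt]
          field_simp
        rw [Rat.divInt_eq_div, h7]
        push_cast
        ring
      have := Rat.den_dvd (A₁ - A₂) ((b.den : ℤ) ^ L)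
      rw [← hdiv] at this
      have h2 : (t.den : ℤ) ∣ ((b.den ^ L : ℕ) : ℤ) := by push_cast; exact this
      exact_mod_cast h2
    have hcop : Nat.Coprime t.den b.den := by
      have hd : t.den ∣ (T₂ : ℚ).den * (T₁ : ℚ).den := by
        have := Rat.add_den_dvd (T₂ : ℚ) (-(T₁ : ℚ))
        rw [Rat.den_neg_eq_den] at this
        simpa [ht, sub_eq_add_neg] using this
      have : Nat.Coprime ((T₂ : ℚ).den * (T₁ : ℚ).den) b.den := by
        rw [NNRat.den_coe, NNRat.den_coe]
        exact Nat.Coprime.mul hT₂cop hT₁cop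
      exact Nat.Coprime.coprime_dvd_left hd this
    exact (hcop.pow_right L).eq_one_of_dvd hdvd1
  have htnum : (t.num : ℚ) = t := by
    conv_rhs => rw [← Rat.num_div_den t]
    rw [htden]
    simp
  -- integer equation
  have hZ : A₁ - A₂ = (b.den : ℤ) ^ L * t.num := by
    have : ((A₁ - A₂ : ℤ) : ℚ) = (((b.den : ℤ) ^ L * t.num : ℤ) : ℚ) := by
      rw [hzt]
      push_cast
      rw [htnum]
    exact_mod_cast this
  have hqdvd : (b.den : ℤ) ∣ A₁ - A₂ := by
    rw [hZ]
    exact Dvd.dvd.mul_right (dvd_pow_self _ (by omega)) _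
  -- peel off the top term
  obtain ⟨L', rfl⟩ : ∃ L', L = L' + 1 := ⟨L - 1, by omega⟩
  have hsplitsum : A₁ - A₂ = (∑ m ∈ Finset.Icc 1 L', ((c m : ℤ) - (c' m : ℤ)) * (b.num : ℤ) ^ m * (b.den : ℤ) ^ (L' + 1 - m))
      + ((c (L' + 1) : ℤ) - (c' (L' + 1) : ℤ)) * (b.num : ℤ) ^ (L' + 1) := by
    have hAA : A₁ - A₂ = ∑ m ∈ Finset.Icc 1 (L' + 1),
        ((c m : ℤ) - (c' m : ℤ)) * (b.num : ℤ) ^ m * (b.den : ℤ) ^ (L' + 1 - m) := by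
      rw [hA₁, hA₂, ← Finset.sum_sub_distrib]
      exact Finset.sum_congr rfl fun m _ => by ring
    rw [hAA, Finset.sum_Icc_succ_top (by omega : 1 ≤ L' + 1)]
    congr 1
    rw [(by omega : L' + 1 - (L' + 1) = 0), pow_zero, mul_one]
  have hlowdvd : (b.den : ℤ) ∣ ∑ m ∈ Finset.Icc 1 L', ((c m : ℤ) - (c' m : ℤ)) * (b.num : ℤ) ^ m * (b.den : ℤ) ^ (L' + 1 - m) := by
    apply Finset.dvd_sum
    intro m hm
    obtain ⟨hm1, hmL⟩ := Finset.mem_Icc.1 hm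
    exact Dvd.dvd.mul_left (dvd_pow_self _ (by omega : L' + 1 - m ≠ 0)) _
  have htopdvd : (b.den : ℤ) ∣ ((c (L' + 1) : ℤ) - (c' (L' + 1) : ℤ)) * (b.num : ℤ) ^ (L' + 1) := by
    have := dvd_sub hqdvd hlowdvd
    rw [hsplitsum] at this
    simpa using this
  have hcopqp : IsCoprime ((b.den : ℤ)) ((b.num : ℤ) ^ (L' + 1)) := by
    have : Nat.Coprime b.den b.num := (NNRat.coprime_num_den b).symm
    exact (Nat.Coprime.isCoprime this).pow_right
  have hfinal : (b.den : ℤ) ∣ (c (L' + 1) : ℤ) - (c' (L' + 1) : ℤ) :=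
    hcopqp.dvd_of_dvd_mul_right htopdvd
  have : (c (L' + 1) : ℤ) - (c' (L' + 1) : ℤ) = 0 := by
    apply Int.eq_zero_of_abs_lt_dvd hfinal
    rw [abs_lt]
    constructor <;> [skip; skip] <;>
      · have h1 : c (L' + 1) < b.den := hredu
        have h2 : c' (L' + 1) < b.den := hredv
        push_cast
        omega
  have e5 : c (L' + 1) = Multiset.count (b ^ (L' + 1)) u := rfl
  have e6 : c' (L' + 1) = Multiset.count (b ^ (L' + 1)) v := rfl
  omega

/-- uniqueness of reduced multisets of generators with a given sum -/
lemma reduced_unique (hden : ∀ b ∈ B, 2 ≤ b.den)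
    (hgcd : ∀ b ∈ B, ∀ b' ∈ B, b ≠ b' → Nat.Coprime b.den b'.den)
    {u v : Multiset ℚ≥0} (hu : ∀ a ∈ u, a ∈ Gen B) (hv : ∀ a ∈ v, a ∈ Gen B)
    (hru : Reduced B u) (hrv : Reduced B v) (hsum : u.sum = v.sum) : u = v := by
  classical
  set w : Multiset ℚ≥0 := u ∩ v with hw
  have hwu : w ≤ u := Multiset.inter_le_left
  have hwv : w ≤ v := Multiset.inter_le_right
  set u' : Multiset ℚ≥0 := u - w with hu'def
  set v' : Multiset ℚ≥0 := v - w with hv'def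
  have hu'add : u' + w = u := tsub_add_cancel_of_le hwu
  have hv'add : v' + w = v := tsub_add_cancel_of_le hwv
  have hsum' : u'.sum = v'.sum := by
    have h : u'.sum + w.sum = v'.sum + w.sum := by
      rw [← Multiset.sum_add, ← Multiset.sum_add, hu'add, hv'add, hsum]
    exact add_right_cancel h
  have hcnt : ∀ a : ℚ≥0, u'.count a = u.count a - min (u.count a) (v.count a)
      ∧ v'.count a = v.count a - min (u.count a) (v.count a) := by
    intro a
    constructor
    · rw [hu'def, Multiset.count_sub, hw, Multiset.count_inter]
    · rw [hv'def, Multiset.count_sub, hw, Multiset.count_inter]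
  have hdisj : ∀ a : ℚ≥0, u'.count a = 0 ∨ v'.count a = 0 := by
    intro a
    obtain ⟨h1, h2⟩ := hcnt a
    omega
  have hu' : ∀ a ∈ u', a ∈ Gen B := fun a ha => hu a (Multiset.mem_of_le tsub_le_self ha)
  have hv' : ∀ a ∈ v', a ∈ Gen B := fun a ha => hv a (Multiset.mem_of_le tsub_le_self ha)
  have hnopow : ∀ b ∈ B, ∀ m : ℕ, 1 ≤ m → (u' + v').count (b ^ m) = 0 := by
    by_contra hcon
    push_neg at hcon
    obtain ⟨b, hb, m, hm1, hcntm⟩ := hcon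
    have hq2 := hden b hb
    set S : Multiset ℚ≥0 := u' + v' with hS
    set N : ℕ := (S.map NNRat.den).sum with hN
    have hbound : ∀ j : ℕ, 0 < S.count (b ^ j) → j ≤ N := by
      intro j hj
      have hmem : b ^ j ∈ S := Multiset.count_pos.1 hj
      have hdmem : (b ^ j).den ∈ S.map NNRat.den := Multiset.mem_map_of_mem _ hmem
      have hle : (b ^ j).den ≤ N := Multiset.single_le_sum (fun x _ => Nat.zero_le x) _ hdmem
      have hlt : j < b.den ^ j := Nat.lt_pow_self (by omega : 1 < b.den)
      rw [pow_den] at hle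
      omega
    have hmpos : 0 < S.count (b ^ m) := by omega
    have hlvne : ((Finset.range (N + 1)).filter
        (fun j => 1 ≤ j ∧ 0 < S.count (b ^ j))).Nonempty :=
      ⟨m, Finset.mem_filter.2 ⟨Finset.mem_range.2 (by have := hbound m hmpos; omega), hm1, hmpos⟩⟩
    obtain ⟨L, hLmem, hLmax⟩ : ∃ L ∈ (Finset.range (N + 1)).filter
        (fun j => 1 ≤ j ∧ 0 < S.count (b ^ j)),
        ∀ j ∈ (Finset.range (N + 1)).filter (fun j => 1 ≤ j ∧ 0 < S.count (b ^ j)), j ≤ L :=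
      ⟨_, Finset.max'_mem _ hlvne, fun j hj => Finset.le_max' _ j hj⟩
    rw [Finset.mem_filter, Finset.mem_range] at hLmem
    obtain ⟨hLr, hL1, hLpos⟩ := hLmem
    have htop : ∀ j, L < j → S.count (b ^ j) = 0 := by
      intro j hj
      by_contra h
      have hjpos : 0 < S.count (b ^ j) := by omega
      have hjlv := hLmax j (Finset.mem_filter.2
        ⟨Finset.mem_range.2 (by have := hbound j hjpos; omega), by omega, hjpos⟩)
      omega
    have htopu' : ∀ j, L < j → u'.count (b ^ j) = 0 := by
      intro j hj
      have := htop j hj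
      rw [hS, Multiset.count_add] at this
      omega
    have htopv' : ∀ j, L < j → v'.count (b ^ j) = 0 := by
      intro j hj
      have := htop j hj
      rw [hS, Multiset.count_add] at this
      omega
    have hredu' : u'.count (b ^ L) < b.den := by
      have h1 : u'.count (b ^ L) ≤ u.count (b ^ L) := Multiset.count_le_of_le _ tsub_le_self
      have h2 : u.count (b ^ L) < b.den := by
        obtain ⟨L2, rfl⟩ : ∃ L2, L = L2 + 1 := ⟨L - 1, by omega⟩
        exact hru b hb L2
      omega
    have hredv' : v'.count (b ^ L) < b.den := by
      have h1 : v'.count (b ^ L) ≤ v.count (b ^ L) := Multiset.count_le_of_le _ tsub_le_self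
      have h2 : v.count (b ^ L) < b.den := by
        obtain ⟨L2, rfl⟩ : ∃ L2, L = L2 + 1 := ⟨L - 1, by omega⟩
        exact hrv b hb L2
      omega
    have hkey := key_congr hden hgcd hb hL1 hu' hv' hsum' htopu' htopv' hredu' hredv'
    have hScnt : S.count (b ^ L) = u'.count (b ^ L) + v'.count (b ^ L) := by
      rw [hS, Multiset.count_add]
    rcases hdisj (b ^ L) with h | h <;> omega
  have hones : ∀ a ∈ u' + v', a = 1 := by
    intro a ha
    have haG : a ∈ Gen B := by
      rcases Multiset.mem_add.1 ha with h | h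
      exacts [hu' a h, hv' a h]
    obtain ⟨b, hb, j, rfl⟩ := haG
    rcases Nat.eq_zero_or_pos j with rfl | hj
    · rw [pow_zero]
    · exfalso
      have h0 := hnopow b hb j hj
      rw [← Multiset.count_pos] at ha
      omega
  have hu'rep : u' = Multiset.replicate u'.card 1 :=
    Multiset.eq_replicate_card.2 fun a ha => hones a (Multiset.mem_add.2 (Or.inl ha))
  have hv'rep : v' = Multiset.replicate v'.card 1 :=
    Multiset.eq_replicate_card.2 fun a ha => hones a (Multiset.mem_add.2 (Or.inr ha))
  have hcardeq : u'.card = v'.card := by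
    have h1 : u'.sum = (u'.card : ℚ≥0) := by
      conv_lhs => rw [hu'rep]
      rw [Multiset.sum_replicate, nsmul_eq_mul, mul_one]
    have h2 : v'.sum = (v'.card : ℚ≥0) := by
      conv_lhs => rw [hv'rep]
      rw [Multiset.sum_replicate, nsmul_eq_mul, mul_one]
    have : (u'.card : ℚ≥0) = (v'.card : ℚ≥0) := by rw [← h1, ← h2, hsum']
    exact_mod_cast this
  have hzero : u' = 0 ∧ v' = 0 := by
    have hcu : u'.count 1 = u'.card := by rw [hu'rep]; simp
    have hcv : v'.count 1 = v'.card := by rw [hv'rep]; simp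
    rcases hdisj 1 with h | h
    · have h1 : u'.card = 0 := by omega
      have h2 : v'.card = 0 := by omega
      exact ⟨Multiset.card_eq_zero.1 h1, Multiset.card_eq_zero.1 h2⟩
    · have h2 : v'.card = 0 := by omega
      have h1 : u'.card = 0 := by omega
      exact ⟨Multiset.card_eq_zero.1 h1, Multiset.card_eq_zero.1 h2⟩
  rw [← hu'add, ← hv'add, hzero.1, hzero.2]

end KeyHelpers

end Basic

section Walk

/-- along a ±δ walk, all values are congruent mod δ -/
lemma walk_mod {δ k : ℕ} (g : ℕ → ℕ)
    (hstep : ∀ i < k, g (i + 1) = g i + δ ∨ g i = g (i + 1) + δ) :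
    ∀ i ≤ k, (δ : ℤ) ∣ (g i : ℤ) - (g 0 : ℤ) := by
  intro i
  induction i with
  | zero => intro _; simp
  | succ j IH =>
    intro hj
    have h1 := IH (by omega)
    have h2 := hstep j (by omega)
    obtain ⟨e, he⟩ := h1
    rcases h2 with h | h
    · exact ⟨e + 1, by push_cast [h]; linarith⟩
    · exact ⟨e - 1, by push_cast [(by omega : g (j+1) = g j - δ), (by omega : δ ≤ g j)]; ring_nf; linarith⟩

/-- a ±δ walk that strictly increases somewhere passes through `g 0 + δ` -/
lemma walk_hit {δ k : ℕ} (hδ : 0 < δ) (g : ℕ → ℕ)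
    (hstep : ∀ i < k, g (i + 1) = g i + δ ∨ g i = g (i + 1) + δ)
    (hlt : g 0 < g k) : ∃ i ≤ k, g i = g 0 + δ := by
  classical
  have hmod := walk_mod g hstep
  have hex : ∃ i, i ≤ k ∧ g 0 < g i := ⟨k, le_rfl, hlt⟩
  obtain ⟨i₀, ⟨hi₀k, hi₀lt⟩, hmin⟩ : ∃ i₀, (i₀ ≤ k ∧ g 0 < g i₀) ∧
      ∀ j, j < i₀ → ¬(j ≤ k ∧ g 0 < g j) :=
    ⟨Nat.find hex, Nat.find_spec hex, fun j hj => Nat.find_min hex hj⟩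
  have hi₀pos : 0 < i₀ := by
    rcases Nat.eq_zero_or_pos i₀ with h | h
    · exfalso; rw [h] at hi₀lt; omega
    · exact h
  have hprevle : g (i₀ - 1) ≤ g 0 := by
    by_contra h
    exact hmin (i₀ - 1) (by omega) ⟨by omega, by omega⟩
  have hstepi := hstep (i₀ - 1) (by omega)
  rw [(by omega : i₀ - 1 + 1 = i₀)] at hstepi
  have hup : g i₀ = g (i₀ - 1) + δ := by
    rcases hstepi with h | h
    · exact h
    · omega
  obtain ⟨e, he⟩ := hmod (i₀ - 1) (by omega)
  have heq : g (i₀ - 1) = g 0 := by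
    have h3 : -(δ : ℤ) < (g (i₀ - 1) : ℤ) - g 0 := by push_cast; omega
    have h4 : (g (i₀ - 1) : ℤ) - g 0 ≤ 0 := by push_cast; omega
    have he0 : e = 0 := by
      by_contra he0
      rcases lt_or_gt_of_ne he0 with hneg | hpos
      · nlinarith [he]
      · nlinarith [he]
    rw [he0, mul_zero] at he
    omega
  exact ⟨i₀, hi₀k, by omega⟩

end Walk

section Main

variable {B : Set ℚ≥0}

lemma chain_invariant (k : ℕ) (g : ℕ → Multiset ℚ≥0)
    (hstep : ∀ i < k, Step B (g i) (g (i + 1))) :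
    ∀ i ≤ k, (g i).sum = (g 0).sum ∧ ((∀ a ∈ g 0, a ∈ Gen B) → ∀ a ∈ g i, a ∈ Gen B) := by
  intro i
  induction i with
  | zero => intro _; exact ⟨rfl, fun h => h⟩
  | succ j IH =>
    intro hj
    obtain ⟨h1, h2⟩ := IH (by omega)
    have hs := hstep j (by omega)
    exact ⟨by rw [hs.sum_eq, h1], fun h0 => hs.mem_gen (h2 h0)⟩

lemma exists_intermediate {δ : ℕ} (hδpos : 0 < δ)
    (hpos : ∀ b ∈ B, 0 < b) (hden : ∀ b ∈ B, 2 ≤ b.den)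
    (hgcd : ∀ b ∈ B, ∀ b' ∈ B, b ≠ b' → Nat.Coprime b.den b'.den)
    (hδ : ∀ b ∈ B, ((b.num : ℤ) - (b.den : ℤ)).natAbs = δ)
    {x : ℚ≥0} {s t : Multiset ℚ≥0}
    (hs : ∀ a ∈ s, a ∈ Gen B) (ht : ∀ a ∈ t, a ∈ Gen B)
    (hssum : s.sum = x) (htsum : t.sum = x)
    (hlt : s.card < t.card) :
    (∃ u : Multiset ℚ≥0, (∀ a ∈ u, a ∈ Gen B) ∧ u.sum = x ∧ u.card = s.card + δ)
      ∧ (δ : ℤ) ∣ (t.card : ℤ) - (s.card : ℤ) := by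
  obtain ⟨k₁, g₁, hg₁0, hg₁s, hg₁r⟩ := reduce_exists hpos hden s hs
  obtain ⟨k₂, g₂, hg₂0, hg₂s, hg₂r⟩ := reduce_exists hpos hden t ht
  have inv₁ := chain_invariant k₁ g₁ hg₁s
  have inv₂ := chain_invariant k₂ g₂ hg₂s
  have hG₁ : ∀ a ∈ g₁ 0, a ∈ Gen B := by rw [hg₁0]; exact hs
  have hG₂ : ∀ a ∈ g₂ 0, a ∈ Gen B := by rw [hg₂0]; exact ht
  have hend : g₁ k₁ = g₂ k₂ := by
    apply reduced_unique hden hgcd ((inv₁ k₁ le_rfl).2 hG₁) ((inv₂ k₂ le_rfl).2 hG₂) hg₁r hg₂r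
    rw [(inv₁ k₁ le_rfl).1, (inv₂ k₂ le_rfl).1, hg₁0, hg₂0, hssum, htsum]
  set K := k₁ + k₂ with hK
  set G : ℕ → Multiset ℚ≥0 := fun i => if i < k₁ then g₁ i else g₂ (K - i) with hG
  have hGeval : ∀ i, G i = if i < k₁ then g₁ i else g₂ (K - i) := fun i => rfl
  have hG0 : G 0 = s := by
    rw [hGeval 0]
    rcases Nat.eq_zero_or_pos k₁ with hk₁ | hk₁
    · rw [if_neg (by omega), (by omega : K - 0 = k₂), ← hend, hk₁, hg₁0]
    · rw [if_pos hk₁, hg₁0]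
  have hGK : G K = t := by
    rw [hGeval K, if_neg (by omega : ¬ K < k₁), (by omega : K - K = 0), hg₂0]
  have hGmem : ∀ i ≤ K, ((G i).sum = x ∧ ∀ a ∈ G i, a ∈ Gen B) := by
    intro i hi
    rw [hGeval i]
    by_cases h : i < k₁
    · rw [if_pos h]
      refine ⟨?_, (inv₁ i (by omega)).2 hG₁⟩
      rw [(inv₁ i (by omega)).1, hg₁0, hssum]
    · rw [if_neg h]
      have hK2 : K - i ≤ k₂ := by omega
      refine ⟨?_, (inv₂ (K - i) hK2).2 hG₂⟩
      rw [(inv₂ (K - i) hK2).1, hg₂0, htsum]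
  have hcard : ∀ i < K, ((G (i + 1)).card = (G i).card + δ ∨ (G i).card = (G (i + 1)).card + δ) := by
    intro i hi
    by_cases h : i + 1 < k₁
    · have hi' : i < k₁ := by omega
      have hstep : Step B (G i) (G (i + 1)) := by
        rw [hGeval i, hGeval (i + 1), if_pos h, if_pos hi']
        exact hg₁s i hi'
      exact hstep.card_pm hδ
    · by_cases h2 : i < k₁
      · have hik : i + 1 = k₁ := by omega
        have hstep : Step B (G i) (G (i + 1)) := by
          rw [hGeval i, hGeval (i + 1), if_pos h2, if_neg (by omega : ¬ i + 1 < k₁),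
            (by omega : K - (i + 1) = k₂), ← hend, ← hik]
          exact hg₁s i h2
        exact hstep.card_pm hδ
      · have hstep : Step B (G (i + 1)) (G i) := by
          rw [hGeval i, hGeval (i + 1), if_neg (by omega : ¬ i + 1 < k₁), if_neg h2]
          have hj : K - (i + 1) < k₂ := by omega
          have he : K - (i + 1) + 1 = K - i := by omega
          rw [← he]
          exact hg₂s (K - (i + 1)) hj
        rcases hstep.card_pm hδ with hc | hc
        · exact Or.inr hc
        · exact Or.inl hc
  have hwalkstep : ∀ i < K, ((fun i => (G i).card) (i + 1) = (fun i => (G i).card) i + δ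
      ∨ (fun i => (G i).card) i = (fun i => (G i).card) (i + 1) + δ) := hcard
  constructor
  · obtain ⟨i₀, hi₀K, hi₀⟩ := walk_hit hδpos (fun i => (G i).card) hwalkstep
      (by simp only [hG0, hGK]; exact hlt)
    obtain ⟨hsum₀, hmem₀⟩ := hGmem i₀ hi₀K
    refine ⟨G i₀, hmem₀, hsum₀, ?_⟩
    simpa [hG0] using hi₀
  · have := walk_mod (fun i => (G i).card) hwalkstep K le_rfl
    simpa [hG0, hGK] using this

lemma mem_MB_iff {MB : AddSubmonoid ℚ≥0} (hMB : MB = AddSubmonoid.closure (Gen B)) {x : ℚ≥0} :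
    x ∈ MB ↔ ∃ s : Multiset ℚ≥0, (∀ a ∈ s, a ∈ Gen B) ∧ s.sum = x := by
  subst hMB
  constructor
  · exact fun h => AddSubmonoid.exists_multiset_of_mem_closure h
  · rintro ⟨s, hsG, rfl⟩
    exact AddSubmonoid.multiset_sum_mem _ s fun a ha => AddSubmonoid.subset_closure (hsG a ha)

lemma gen_pos (hpos : ∀ b ∈ B, 0 < b) {a : ℚ≥0} (ha : a ∈ Gen B) : 0 < a := by
  obtain ⟨b, hb, n, rfl⟩ := ha
  exact pow_pos (hpos b hb) n

lemma sum_pos_of_ne (hpos : ∀ b ∈ B, 0 < b) {s : Multiset ℚ≥0}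
    (hsG : ∀ a ∈ s, a ∈ Gen B) (hs : s ≠ 0) : s.sum ≠ 0 := by
  obtain ⟨a, ha⟩ := Multiset.exists_mem_of_ne_zero hs
  obtain ⟨r, hr⟩ := Multiset.exists_cons_of_mem ha
  rw [hr, Multiset.sum_cons]
  have h1 : 0 < a := gen_pos hpos (hsG a ha)
  positivity

lemma atoms_sub_gen (hpos : ∀ b ∈ B, 0 < b)
    {MB : AddSubmonoid ℚ≥0} (hMB : MB = AddSubmonoid.closure (Gen B)) :
    PMatoms MB ⊆ Gen B := by
  rintro a ⟨haM, ha0, hsplit⟩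
  obtain ⟨s, hsG, hssum⟩ := (mem_MB_iff hMB).1 haM
  have hs0 : s ≠ 0 := by rintro rfl; exact ha0 hssum.symm
  obtain ⟨a₀, ha₀⟩ := Multiset.exists_mem_of_ne_zero hs0
  obtain ⟨r, hr⟩ := Multiset.exists_cons_of_mem ha₀
  rcases eq_or_ne r 0 with rfl | hr0
  · rw [hr, Multiset.sum_cons, Multiset.sum_zero, add_zero] at hssum
    rw [← hssum]
    exact hsG a₀ ha₀
  · exfalso
    have hrG : ∀ b ∈ r, b ∈ Gen B := fun b hb => hsG b (by rw [hr]; exact Multiset.mem_cons_of_mem hb)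
    have h1 : a₀ ∈ MB := (mem_MB_iff hMB).2 ⟨{a₀}, by simpa using hsG a₀ ha₀, Multiset.sum_singleton a₀⟩
    have h2 : r.sum ∈ MB := (mem_MB_iff hMB).2 ⟨r, hrG, rfl⟩
    have h3 : a₀ ≠ 0 := ne_of_gt (gen_pos hpos (hsG a₀ ha₀))
    have h4 : r.sum ≠ 0 := sum_pos_of_ne hpos hrG hr0
    exact hsplit a₀ h1 r.sum h2 h3 h4 (by rw [← hssum, hr, Multiset.sum_cons])

lemma gen_sub_atoms (hpos : ∀ b ∈ B, 0 < b) (hden : ∀ b ∈ B, 2 ≤ b.den)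
    (hgcd : ∀ b ∈ B, ∀ b' ∈ B, b ≠ b' → Nat.Coprime b.den b'.den)
    (hnum : ∀ b ∈ B, 1 < b.num)
    {MB : AddSubmonoid ℚ≥0} (hMB : MB = AddSubmonoid.closure (Gen B)) :
    Gen B ⊆ PMatoms MB := by
  rintro a ⟨b, hb, n, rfl⟩
  refine ⟨?_, ne_of_gt (pow_pos (hpos b hb) n), ?_⟩
  · rw [hMB]; exact AddSubmonoid.subset_closure ⟨b, hb, n, rfl⟩
  · rintro y hy z hz hy0 hz0 hsplit
    obtain ⟨sy, hsyG, hsysum⟩ := (mem_MB_iff hMB).1 hy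
    obtain ⟨sz, hszG, hszsum⟩ := (mem_MB_iff hMB).1 hz
    set u : Multiset ℚ≥0 := sy + sz with hu
    have husum : u.sum = b ^ n := by rw [hu, Multiset.sum_add, hsysum, hszsum, ← hsplit]
    have huG : ∀ a ∈ u, a ∈ Gen B := by
      intro a ha
      rcases Multiset.mem_add.1 ha with h | h
      exacts [hsyG a h, hszG a h]
    have hsy0 : sy ≠ 0 := by rintro rfl; exact hy0 hsysum.symm
    have hsz0 : sz ≠ 0 := by rintro rfl; exact hz0 hszsum.symm
    have hcard2 : 2 ≤ u.card := by
      have c1 : 0 < sy.card := Multiset.card_pos.2 hsy0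
      have c2 : 0 < sz.card := Multiset.card_pos.2 hsz0
      rw [hu, Multiset.card_add]
      omega
    obtain ⟨k, g, hg0, hgs, hgr⟩ := reduce_exists hpos hden u huG
    have inv := chain_invariant k g hgs
    have hG0 : ∀ a ∈ g 0, a ∈ Gen B := by rw [hg0]; exact huG
    have hred1 : Reduced B {b ^ n} := by
      intro b' hb' m
      have hc : Multiset.count (b' ^ (m + 1)) {b ^ n} ≤ 1 := by
        rw [Multiset.count_singleton]
        split <;> omega
      have := hden b' hb'
      omega
    have hsing : ∀ a ∈ ({b ^ n} : Multiset ℚ≥0), a ∈ Gen B := by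
      intro a ha
      rw [Multiset.mem_singleton.1 ha]
      exact ⟨b, hb, n, rfl⟩
    have hgkred : g k = {b ^ n} :=
      reduced_unique hden hgcd ((inv k le_rfl).2 hG0) hsing hgr hred1
        (by rw [(inv k le_rfl).1, hg0, husum, Multiset.sum_singleton])
    rcases Nat.eq_zero_or_pos k with rfl | hk
    · rw [hg0] at hgkred
      have := congrArg Multiset.card hgkred
      rw [Multiset.card_singleton] at this
      omega
    · have hlast := hgs (k - 1) (by omega)
      rw [(by omega : k - 1 + 1 = k), hgkred] at hlast
      obtain ⟨b', hb', m, hle, heq⟩ := hlast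
      have hcnt : b'.num ≤ Multiset.count (b' ^ m) ({b ^ n} : Multiset ℚ≥0) := by
        rw [heq, Multiset.count_add, Multiset.count_replicate, if_pos rfl]
        omega
      have h1 : Multiset.count (b' ^ m) ({b ^ n} : Multiset ℚ≥0) ≤ 1 := by
        rw [Multiset.count_singleton]
        split <;> omega
      have := hnum b' hb'
      omega

end Main

end Stmt15Aux

theorem stmt15 (B : Set ℚ≥0) (hne : B.Nonempty)
    (hB : ∀ b ∈ B, 0 < b ∧ ∀ n : ℕ, b ≠ (n : ℚ≥0))
    (hcond : ∀ b ∈ B, ∀ b' ∈ B, b ≠ b' →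
      1 < b.num ∧ Nat.gcd b.den b'.den = 1 ∧
      ((b.num : ℤ) - (b.den : ℤ)).natAbs = ((b'.num : ℤ) - (b'.den : ℤ)).natAbs)
    (b₁ : ℚ≥0) (hb₁ : b₁ ∈ B)
    (MB : AddSubmonoid ℚ≥0)
    (hMB : MB = AddSubmonoid.closure {q : ℚ≥0 | ∃ b ∈ B, ∃ n : ℕ, q = b ^ n}) :
    PMDelta MB ⊆ {((b₁.num : ℤ) - (b₁.den : ℤ)).natAbs} := by
  intro d hd
  obtain ⟨x, hx, hdist⟩ := Set.mem_iUnion₂.1 hd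
  obtain ⟨hxM, hx0⟩ := hx
  obtain ⟨hdpos, l, hl, hIcc⟩ := hdist
  have hMB' : MB = AddSubmonoid.closure (Stmt15Aux.Gen B) := hMB
  set δ := ((b₁.num : ℤ) - (b₁.den : ℤ)).natAbs with hδdef
  have hpos : ∀ b ∈ B, 0 < b := fun b hb => (hB b hb).1
  have hden : ∀ b ∈ B, 2 ≤ b.den := fun b hb => Stmt15Aux.den_two_le (hB b hb).2
  by_cases hnum : ∀ b ∈ B, 1 < b.num
  · -- all numerators > 1 : the main case
    have hδall : ∀ b ∈ B, ((b.num : ℤ) - (b.den : ℤ)).natAbs = δ := by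
      intro b hb
      rcases eq_or_ne b b₁ with rfl | hne
      · rfl
      · exact (hcond b hb b₁ hb₁ hne).2.2
    have hgcd : ∀ b ∈ B, ∀ b' ∈ B, b ≠ b' → Nat.Coprime b.den b'.den :=
      fun b hb b' hb' hne => (hcond b hb b' hb' hne).2.1
    have hδpos : 0 < δ := by
      have h2 := hden b₁ hb₁
      have hcop := NNRat.coprime_num_den b₁
      rw [hδdef]
      by_contra h
      have heq : b₁.num = b₁.den := by omega
      rw [heq, Nat.Coprime, Nat.gcd_self] at hcop
      omega
    have hAG : PMatoms MB = Stmt15Aux.Gen B :=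
      le_antisymm (Stmt15Aux.atoms_sub_gen hpos hMB')
        (Stmt15Aux.gen_sub_atoms hpos hden hgcd hnum hMB')
    have hld : l + d ∈ PMlengths MB x := by
      have hmem : l + d ∈ PMlengths MB x ∩ Set.Icc l (l + d) := by
        rw [hIcc]
        right
        rfl
      exact hmem.1
    obtain ⟨s, ⟨hsA, hssum⟩, hcards⟩ := hl
    obtain ⟨t, ⟨htA, htsum⟩, hcardt⟩ := hld
    have hsG : ∀ a ∈ s, a ∈ Stmt15Aux.Gen B := fun a ha => hAG ▸ hsA a ha
    have htG : ∀ a ∈ t, a ∈ Stmt15Aux.Gen B := fun a ha => hAG ▸ htA a ha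
    have hlt : s.card < t.card := by rw [hcards, hcardt]; omega
    obtain ⟨⟨u, huG, husum, hucard⟩, hdvd⟩ :=
      Stmt15Aux.exists_intermediate hδpos hpos hden hgcd hδall hsG htG hssum htsum hlt
    have hmemlen : (l + δ) ∈ PMlengths MB x :=
      ⟨u, ⟨fun a ha => hAG.symm ▸ huG a ha, husum⟩, by rw [hucard, hcards]⟩
    have hδd : δ ≤ d := by
      obtain ⟨e, he⟩ := hdvd
      rw [hcards, hcardt] at he
      have he' : (d : ℤ) = δ * e := by push_cast at he; linarith
      have he1 : 1 ≤ e := by nlinarith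
      nlinarith
    have hin : l + δ ∈ ({l, l + d} : Set ℕ) := by
      rw [← hIcc]
      exact ⟨hmemlen, Set.mem_Icc.2 ⟨by omega, by omega⟩⟩
    rcases hin with h | h
    · exfalso
      have : l + δ = l := h
      omega
    · have : l + δ = l + d := h
      have hdδ : d = δ := by omega
      rw [hdδ]
      rfl
  · -- some numerator is 1 : no atoms
    exfalso
    push_neg at hnum
    obtain ⟨b₀, hb₀, hb₀num⟩ := hnum
    have honly : ∀ b' ∈ B, b' = b₀ := by
      intro b' hb'
      by_contra hne
      have := (hcond b₀ hb₀ b' hb' (fun h => hne h.symm)).1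
      omega
    have hnum1 : b₀.num = 1 := by
      have := Stmt15Aux.num_pos (hpos b₀ hb₀)
      omega
    have hatoms : PMatoms MB = ∅ := by
      rw [Set.eq_empty_iff_forall_notMem]
      intro a ha
      have haG := Stmt15Aux.atoms_sub_gen hpos hMB' ha
      obtain ⟨b', hb', n, rfl⟩ := haG
      have hb'e : b' = b₀ := honly b' hb'
      obtain ⟨haM, ha0, hsplit⟩ := ha
      have hy : b' ^ (n + 1) ∈ MB := by
        rw [hMB']
        exact AddSubmonoid.subset_closure ⟨b', hb', n + 1, rfl⟩
      have hz : (b'.den - 1) • b' ^ (n + 1) ∈ MB := nsmul_mem hy (b'.den - 1)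
      have hq2 : 2 ≤ b'.den := hden b' hb'
      have hy0 : b' ^ (n + 1) ≠ 0 := ne_of_gt (pow_pos (hpos b' hb') _)
      have hz0 : (b'.den - 1) • b' ^ (n + 1) ≠ 0 := by
        rw [nsmul_eq_mul]
        have h1 : (0 : ℚ≥0) < ((b'.den - 1 : ℕ) : ℚ≥0) := by
          have : (1 : ℕ) ≤ b'.den - 1 := by omega
          exact_mod_cast Nat.cast_pos.2 (by omega : 0 < b'.den - 1)
        positivity
      apply hsplit (b' ^ (n + 1)) hy ((b'.den - 1) • b' ^ (n + 1)) hz hy0 hz0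
      -- b'^n = b'^(n+1) + (den - 1) • b'^(n+1)
      have hsum : b' ^ (n + 1) + (b'.den - 1) • b' ^ (n + 1) = b'.den • b' ^ (n + 1) := by
        rw [nsmul_eq_mul, nsmul_eq_mul]
        have hc : ((b'.den - 1 : ℕ) : ℚ≥0) + 1 = (b'.den : ℚ≥0) := by
          have hnn : b'.den - 1 + 1 = b'.den := by omega
          exact_mod_cast hnn
        calc b' ^ (n + 1) + ((b'.den - 1 : ℕ) : ℚ≥0) * b' ^ (n + 1)
            = (((b'.den - 1 : ℕ) : ℚ≥0) + 1) * b' ^ (n + 1) := by ring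
          _ = (b'.den : ℚ≥0) * b' ^ (n + 1) := by rw [hc]
      rw [hsum, Stmt15Aux.den_smul_eq b' n]
      have : b'.num = 1 := by rw [hb'e]; exact hnum1
      rw [this]
      simp
    obtain ⟨s, ⟨hsA, hssum⟩, hcards⟩ := hl
    have hs0 : s = 0 := by
      by_contra hs0
      obtain ⟨a, ha⟩ := Multiset.exists_mem_of_ne_zero hs0
      have := hsA a ha
      rw [hatoms] at this
      exact this
    apply hx0
    rw [← hssum, hs0, Multiset.sum_zero]
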